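/- Let A_1, ..., A_m be orthogonal projections (self-adjoint idempotent operators) on a complex inner product space and let ψ be a unit vector. Suppose there are real numbers δ_{ij} ∈ [0,2] such that Re⟨ψ, (A_i A_j + A_j A_i) ψ⟩ ≤ δ_{ij} for all i ≠ j. Then Re⟨ψ, (A_1 + ⋯ + A_m) ψ⟩ ≤ 1 + (Σ_{i<j} δ_{ij})^{1/2}. -/

import Mathlib

open scoped InnerProductSpace

/-- Key technical lemma (Lemma 4 / `orthogonality-implies-soundness`): if the pairwise
anticommutators of projectors are small on a unit vector `ψ`, then the sum of the
projectors has expectation at most `1 + sqrt (∑_{i<j} δ_{ij})`. -/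
theorem stmt0 {V : Type*} [NormedAddCommGroup V] [InnerProductSpace ℂ V] [CompleteSpace V]
    {m : ℕ} (A : Fin m → V →L[ℂ] V)
    (hidem : ∀ i, A i ∘L A i = A i)
    (hsa : ∀ i, ContinuousLinearMap.adjoint (A i) = A i)
    (ψ : V) (hψ : ‖ψ‖ = 1)
    (δ : Fin m → Fin m → ℝ)
    (hδ : ∀ i j, i ≠ j → δ i j ∈ Set.Icc (0:ℝ) 2)
    (h : ∀ i j, i ≠ j → (⟪ψ, (A i ∘L A j + A j ∘L A i) ψ⟫_ℂ).re ≤ δ i j) :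
    (⟪ψ, (∑ i, A i) ψ⟫_ℂ).re ≤
      1 + Real.sqrt (∑ i, ∑ j ∈ Finset.univ.filter (fun j => i < j), δ i j) := by
  set S : V →L[ℂ] V := ∑ i, A i with hS
  set t : ℝ := (⟪ψ, S ψ⟫_ℂ).re with ht
  set D : ℝ := ∑ i, ∑ j ∈ Finset.univ.filter (fun j => i < j), δ i j with hD
  have hD0 : 0 ≤ D := by
    refine Finset.sum_nonneg fun i _ => Finset.sum_nonneg fun j hj => ?_
    exact (hδ i j (Finset.mem_filter.mp hj).2.ne).1
  -- inner as inner of images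
  have hinner : ∀ i j, ⟪ψ, (A i) ((A j) ψ)⟫_ℂ = ⟪(A i) ψ, (A j) ψ⟫_ℂ := by
    intro i j
    rw [← ContinuousLinearMap.adjoint_inner_left, hsa i]
  have hnsq : ∀ x : V, (⟪x, x⟫_ℂ).re = ‖x‖ ^ 2 := fun x => by
    rw [← RCLike.re_to_complex]
    exact inner_self_eq_norm_sq x
  have hexp : ∀ i, (⟪ψ, (A i) ψ⟫_ℂ).re = ‖(A i) ψ‖ ^ 2 := by
    intro i
    have h1 : ⟪ψ, (A i) ψ⟫_ℂ = ⟪(A i) ψ, (A i) ψ⟫_ℂ := by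
      conv_lhs => rw [← hidem i]
      exact hinner i i
    rw [h1, hnsq]
  -- t = ∑ ‖A i ψ‖²
  have htsum : t = ∑ i, ‖(A i) ψ‖ ^ 2 := by
    rw [ht, hS, ContinuousLinearMap.sum_apply, inner_sum, Complex.re_sum]
    exact Finset.sum_congr rfl fun i _ => hexp i
  have ht0 : 0 ≤ t := htsum ▸ Finset.sum_nonneg fun i _ => sq_nonneg _
  -- ‖S ψ‖² ≤ t + D
  have hcross : ∀ i j, i ≠ j →
      (⟪(A i) ψ, (A j) ψ⟫_ℂ).re + (⟪(A j) ψ, (A i) ψ⟫_ℂ).re ≤ δ i j := by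
    intro i j hij
    have := h i j hij
    rwa [ContinuousLinearMap.add_apply, inner_add_right, Complex.add_re,
      ContinuousLinearMap.comp_apply, ContinuousLinearMap.comp_apply,
      hinner i j, hinner j i] at this
  have hnorm_sq : ‖S ψ‖ ^ 2 ≤ t + D := by
    have hSψ : S ψ = ∑ i, (A i) ψ := by rw [hS, ContinuousLinearMap.sum_apply]
    have expand : ‖S ψ‖ ^ 2 = ∑ i, ∑ j, (⟪(A i) ψ, (A j) ψ⟫_ℂ).re := by
      rw [← hnsq, hSψ, sum_inner, Complex.re_sum]
      refine Finset.sum_congr rfl fun i _ => ?_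
      rw [inner_sum, Complex.re_sum]
    rw [expand]
    set g : Fin m → Fin m → ℝ := fun i j => (⟪(A i) ψ, (A j) ψ⟫_ℂ).re with hg
    have hgsymm : ∀ i j, g i j = g j i := by
      intro i j
      rw [hg]
      simp only
      rw [← inner_conj_symm, Complex.conj_re]
    have key : ∑ i, ∑ j, g i j
        = ∑ i, g i i + ∑ i, ∑ j ∈ Finset.Ioi i, (g j i + g i j) := by
      rw [Finset.sum_sum_Ioi_add_eq_sum_sum_off_diag (fun i j => g i j)]
      rw [← Finset.sum_add_distrib]
      refine Finset.sum_congr rfl fun i _ => ?_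
      have : (Finset.univ : Finset (Fin m)) = insert i ({i}ᶜ : Finset (Fin m)) := by
        ext x; simp [eq_comm]
      rw [this, Finset.sum_insert (by simp)]
      congr 1
      refine Finset.sum_congr ?_ fun j _ => hgsymm i j
      ext x; simp
    rw [key]
    have hdiag : ∑ i, g i i = t := by
      rw [htsum]
      refine Finset.sum_congr rfl fun i _ => ?_
      exact hnsq _
    rw [hdiag]
    refine add_le_add_right ?_ t
    rw [hD]
    refine Finset.sum_le_sum fun i _ => ?_
    have hfilter : (Finset.univ.filter (fun j => i < j)) = Finset.Ioi i := by
      ext x; simp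
    rw [hfilter]
    refine Finset.sum_le_sum fun j hj => ?_
    have hij : i ≠ j := (Finset.mem_Ioi.mp hj).ne
    have := hcross i j hij
    linarith [this]
  -- t ≤ ‖S ψ‖
  have htle : t ≤ ‖S ψ‖ := by
    have h1 := re_inner_le_norm (𝕜 := ℂ) ψ (S ψ)
    rw [RCLike.re_to_complex, hψ, one_mul] at h1
    exact h1
  have ht2 : t ^ 2 ≤ t + D := by
    calc t ^ 2 ≤ ‖S ψ‖ ^ 2 := by
          have := pow_le_pow_left₀ ht0 htle 2
          exact this
      _ ≤ t + D := hnorm_sq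
  -- conclude
  rcases le_or_gt t 1 with hle | hgt
  · have : (0:ℝ) ≤ Real.sqrt D := Real.sqrt_nonneg D
    linarith
  · have hsub : (t - 1) ^ 2 ≤ D := by nlinarith
    have : t - 1 ≤ Real.sqrt D := by
      have h1 : Real.sqrt ((t - 1) ^ 2) ≤ Real.sqrt D := Real.sqrt_le_sqrt hsub
      rwa [Real.sqrt_sq (by linarith : (0:ℝ) ≤ t - 1)] at h1
    linarith
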